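/- Let N ≥ 2 be an integer. If (α_1, …, α_N) ∈ DC_N(C, τ) for some C, τ > 0, then B(α_1, …, α_N) < +∞; that is, Moser's Diophantine condition implies the multivariable Brjuno condition. -/

import Mathlib

/-- `1, α 1, …, α N` are linearly independent over `ℚ`. -/
def RatIndep {N : ℕ} (α : Fin N → ℝ) : Prop :=
  ∀ (q : ℤ) (p : Fin N → ℤ),
    (q : ℝ) + ∑ i, (p i : ℝ) * α i = 0 → q = 0 ∧ ∀ i, p i = 0

/-- The Gauss map `G(α₁,…,α_N, w)`: with `α̂ᵢ = αᵢ` for `i ≠ w`, `α̂_w = 1`,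
and `aᵢ` the integer closest to `α̂ᵢ / α_w`, we set `α̃ᵢ = |aᵢ α_w − α̂ᵢ| / α_w`. -/
noncomputable def gaussStep {N : ℕ} (α : Fin N → ℝ) (w : Fin N) : Fin N → ℝ :=
  fun i =>
    let x : ℝ := (if i = w then (1 : ℝ) else α i) / α w
    |(round x : ℝ) - x|

/-- Moser's Diophantine class `DC_N(C, τ)`: tuples of rationally independent irrationals
in `(0,1)` with `max_j |q α_j − p_j| ≥ C / |q|^τ` for all integers `p_j` and `q ≠ 0`. -/
def DCN {N : ℕ} (C τ : ℝ) (α : Fin N → ℝ) : Prop :=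
  (∀ i, α i ∈ Set.Ioo (0 : ℝ) 1) ∧ RatIndep α ∧
  ∀ q : ℤ, q ≠ 0 → ∀ p : Fin N → ℤ,
    ∃ j, C / |(q : ℝ)| ^ τ ≤ |(q : ℝ) * α j - (p j : ℝ)|

/-- Iteration of the Gauss map along an infinite word `wbar`. -/
noncomputable def gaussIter {N : ℕ} (α : Fin N → ℝ) (wbar : ℕ → Fin N) : ℕ → Fin N → ℝ
  | 0 => α
  | n + 1 => gaussStep (gaussIter α wbar n) (wbar n)

/-- The Brjuno sum `Σₙ α⁽⁰⁾_{w(0)} ⋯ α⁽ⁿ⁻¹⁾_{w(n-1)} log(1/α⁽ⁿ⁾_{w(n)})` along a word. -/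
noncomputable def brjunoSum {N : ℕ} (α : Fin N → ℝ) (wbar : ℕ → Fin N) : ENNReal :=
  ∑' n : ℕ, ENNReal.ofReal
    ((∏ j ∈ Finset.range n, gaussIter α wbar j (wbar j)) *
      Real.log (1 / gaussIter α wbar n (wbar n)))

/-- The multivariable Brjuno function `B(α₁,…,α_N)`. -/
noncomputable def brjuno {N : ℕ} (α : Fin N → ℝ) : ENNReal :=
  ⨅ wbar : ℕ → Fin N, brjunoSum α wbar

namespace DioBrjuno

variable {N : ℕ}

noncomputable def pickMax (hN : 0 < N) (f : Fin N → ℝ) : Fin N :=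
  (Finset.exists_max_image Finset.univ f ⟨⟨0, hN⟩, Finset.mem_univ _⟩).choose

lemma pickMax_spec (hN : 0 < N) (f : Fin N → ℝ) (i : Fin N) : f i ≤ f (pickMax hN f) :=
  (Finset.exists_max_image Finset.univ f ⟨⟨0, hN⟩, Finset.mem_univ _⟩).choose_spec.2
    i (Finset.mem_univ i)

noncomputable def seqA (hN : 0 < N) (α : Fin N → ℝ) : ℕ → Fin N → ℝ
  | 0 => α
  | n + 1 => gaussStep (seqA hN α n) (pickMax hN (seqA hN α n))

noncomputable def wseq (hN : 0 < N) (α : Fin N → ℝ) (n : ℕ) : Fin N :=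
  pickMax hN (seqA hN α n)

noncomputable def pβ (hN : 0 < N) (α : Fin N → ℝ) (n : ℕ) : ℝ :=
  ∏ k ∈ Finset.range n, seqA hN α k (wseq hN α k)

lemma seqA_succ {hN : 0 < N} {α : Fin N → ℝ} (n : ℕ) :
    seqA hN α (n + 1) = gaussStep (seqA hN α n) (wseq hN α n) := rfl

lemma gaussIter_wseq {hN : 0 < N} {α : Fin N → ℝ} (n : ℕ) :
    gaussIter α (wseq hN α) n = seqA hN α n := by
  induction n with
  | zero => rfl
  | succ n ih => show gaussStep _ _ = _; rw [ih]; rfl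

lemma abs_round_neg (x : ℝ) : |(round (-x) : ℝ) - (-x)| = |(round x : ℝ) - x| := by
  rw [abs_sub_comm ((round (-x) : ℝ)) (-x), abs_sub_comm ((round x : ℝ)) x,
    abs_sub_round_eq_min, abs_sub_round_eq_min]
  rcases eq_or_ne (Int.fract x) 0 with h | h
  · rw [Int.fract_neg_eq_zero.mpr h, h]
  · rw [Int.fract_neg h, sub_sub_cancel, min_comm]

lemma gaussStep_le_half (a : Fin N → ℝ) (w i : Fin N) : gaussStep a w i ≤ 1 / 2 := by
  rw [gaussStep, abs_sub_comm]
  exact abs_sub_round _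

lemma seqA_le_one {hN : 0 < N} {α : Fin N → ℝ} (h01 : ∀ i, α i ∈ Set.Ioo (0:ℝ) 1)
    (n : ℕ) (i : Fin N) : seqA hN α n i ≤ 1 := by
  cases n with
  | zero => exact (h01 i).2.le
  | succ n => exact (gaussStep_le_half _ _ _).trans (by norm_num)

noncomputable def optE (α : Fin N → ℝ) : Option (Fin N) → ℝ := fun l => l.elim 1 α

noncomputable def optV (hN : 0 < N) (α : Fin N → ℝ) (n : ℕ) : Option (Fin N) → ℝ :=
  fun l => l.elim 1 (seqA hN α n)

lemma pkg (hN : 0 < N) (α : Fin N → ℝ) (h01 : ∀ i, α i ∈ Set.Ioo (0:ℝ) 1)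
    (hind : RatIndep α) (n : ℕ) :
    (0 < pβ hN α n) ∧ (∀ i, 0 < seqA hN α n i) ∧
    ∃ (y : Option (Fin N) → ℝ) (B : Option (Fin N) → Option (Fin N) → ℤ),
      (∀ k, optE α k = ∑ l, (B k l : ℝ) * y l) ∧
      (∀ k l, |(B k l : ℝ)| ≤ (2 * N + 1 : ℝ) ^ n / pβ hN α n) ∧
      (∀ l, |y l| = pβ hN α n * optV hN α n l) ∧
      (∀ c : Option (Fin N) → ℤ, (∑ l, (c l : ℝ) * y l) = 0 → ∀ l, c l = 0) := by
  induction n with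
  | zero =>
    have hβ0 : pβ hN α 0 = 1 := Finset.prod_range_zero _
    refine ⟨by rw [hβ0]; norm_num, fun i => (h01 i).1, optE α,
      fun k l => if k = l then 1 else 0, ?_, ?_, ?_, ?_⟩
    · intro k
      simp [apply_ite (fun z : ℤ => (z : ℝ)), ite_mul, Finset.sum_ite_eq]
    · intro k l
      rw [hβ0]
      simp only []
      rcases eq_or_ne k l with h | h <;> simp [h] <;> positivity
    · intro l
      rw [hβ0, one_mul]
      match l with
      | none => simp [optE, optV]
      | some i => simp [optE, optV]; exact abs_of_pos (h01 i).1
    · intro c hc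
      rw [Fintype.sum_option] at hc
      have h := hind (c none) (fun i => c (some i)) (by simpa [optE, mul_comm] using hc)
      intro l
      match l with
      | none => exact h.1
      | some i => exact h.2 i
  | succ n ih =>
    obtain ⟨hβ, hpos, y, B, h1, h2, h3, h4⟩ := ih
    set w := wseq hN α n with hw
    have haw : 0 < seqA hN α n w := hpos w
    have hawle : seqA hN α n w ≤ 1 := seqA_le_one h01 n w
    have hβ' : pβ hN α (n+1) = pβ hN α n * seqA hN α n w := Finset.prod_range_succ _ n
    have hβs : 0 < pβ hN α (n+1) := by rw [hβ']; positivity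
    have hyne : ∀ l, y l ≠ 0 := by
      intro l h0
      have hz := h4 (fun m => if m = l then 1 else 0)
        (by simp [apply_ite (fun z : ℤ => (z : ℝ)), ite_mul, Finset.sum_ite_eq', h0]) l
      simp at hz
    set s := y (some w) with hsdef
    have hsne : s ≠ 0 := hyne (some w)
    have hys : |s| = pβ hN α n * seqA hN α n w := h3 (some w)
    set hat : Fin N → Option (Fin N) := fun i => if i = w then none else some i with hhat
    have hhatw : hat w = none := by simp [hhat]
    have hhatne : ∀ i, i ≠ w → hat i = some i := fun i hi => by simp [hhat, hi]
    have hyhat : ∀ i, |y (hat i)| = pβ hN α n * (if i = w then 1 else seqA hN α n i) := by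
      intro i
      by_cases hiw : i = w
      · rw [hiw, hhatw, if_pos rfl]
        simpa [optV] using h3 none
      · rw [hhatne i hiw, if_neg hiw]
        exact h3 (some i)
    set a' : Fin N → ℤ := fun i => round (y (hat i) / s) with ha'
    set y' : Option (Fin N) → ℝ :=
      fun l => l.elim s (fun i => (a' i : ℝ) * s - y (hat i)) with hy'def
    have hy'none : y' none = s := rfl
    have hy'some : ∀ i, y' (some i) = (a' i : ℝ) * s - y (hat i) := fun i => rfl
    have habs_d : ∀ i, |y (hat i) / s| = (if i = w then 1 else seqA hN α n i) / seqA hN α n w := by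
      intro i
      rw [abs_div, hyhat i, hys, mul_div_mul_left _ _ (ne_of_gt hβ)]
    have hx : ∀ i : Fin N, seqA hN α (n+1) i =
        |(round ((if i = w then 1 else seqA hN α n i) / seqA hN α n w) : ℝ) -
          (if i = w then 1 else seqA hN α n i) / seqA hN α n w| := by
      intro i; rw [seqA_succ]; rfl
    have h3' : ∀ l, |y' l| = pβ hN α (n+1) * optV hN α (n+1) l := by
      intro l
      match l with
      | none =>
        show |s| = pβ hN α (n+1) * 1
        rw [hys, hβ', mul_one]
      | some i =>
        show |(a' i : ℝ) * s - y (hat i)| = pβ hN α (n+1) * seqA hN α (n+1) i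
        have hd : (a' i : ℝ) * s - y (hat i)
            = s * ((round (y (hat i) / s) : ℝ) - y (hat i) / s) := by
          have : (a' i : ℝ) = (round (y (hat i) / s) : ℝ) := by rw [ha']
          rw [this, mul_sub, mul_div_cancel₀ _ hsne, mul_comm]
        have hxnn : 0 ≤ (if i = w then 1 else seqA hN α n i) / seqA hN α n w := by
          apply div_nonneg _ haw.le
          split
          · norm_num
          · exact (hpos i).le
        have habs2 : |(round (y (hat i) / s) : ℝ) - y (hat i) / s|
            = seqA hN α (n+1) i := by
          rcases (abs_eq hxnn).mp (habs_d i) with hc | hc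
          · rw [hc, ← hx i]
          · rw [hc, abs_round_neg, ← hx i]
        rw [hd, abs_mul, hys, habs2, hβ']
    -- sum formula for y'
    have hsum_y' : ∀ c : Option (Fin N) → ℤ, (∑ l, (c l : ℝ) * y' l) =
        ((c none : ℝ) + ∑ i, (c (some i) : ℝ) * (a' i : ℝ)) * s
          - ((c (some w) : ℝ) * y none
            + ∑ i ∈ Finset.univ.erase w, (c (some i) : ℝ) * y (some i)) := by
      intro c
      rw [Fintype.sum_option]
      have e1 : ∀ i ∈ Finset.univ, (c (some i) : ℝ) * y' (some i)
          = ((c (some i) : ℝ) * (a' i : ℝ) * s - (c (some i) : ℝ) * y (hat i)) := by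
        intro i _
        rw [hy'some i]; ring
      rw [Finset.sum_congr rfl e1, Finset.sum_sub_distrib, ← Finset.sum_mul]
      have e2 : ∑ i, (c (some i) : ℝ) * y (hat i)
          = (c (some w) : ℝ) * y none
            + ∑ i ∈ Finset.univ.erase w, (c (some i) : ℝ) * y (some i) := by
        rw [← Finset.add_sum_erase _ (fun i => (c (some i) : ℝ) * y (hat i)) (Finset.mem_univ w)]
        congr 1
        · rw [hhatw]
        · exact Finset.sum_congr rfl fun i hi => by rw [hhatne i (Finset.ne_of_mem_erase hi)]
      rw [e2, hy'none]
      ring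
    -- independence for y'
    have h4' : ∀ c : Option (Fin N) → ℤ, (∑ l, (c l : ℝ) * y' l) = 0 → ∀ l, c l = 0 := by
      intro c hc
      set d : Option (Fin N) → ℤ := fun m => m.elim (-(c (some w)))
        (fun j => if j = w then c none + ∑ i, c (some i) * a' i else -(c (some j))) with hd
      have hd0 : (∑ m, (d m : ℝ) * y m) = 0 := by
        rw [Fintype.sum_option]
        have e3 : ∑ j, (d (some j) : ℝ) * y (some j)
            = ((c none : ℝ) + ∑ i, (c (some i) : ℝ) * (a' i : ℝ)) * y (some w)
              + ∑ j ∈ Finset.univ.erase w, (-(c (some j) : ℝ)) * y (some j) := by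
          rw [← Finset.add_sum_erase _ (fun j => (d (some j) : ℝ) * y (some j)) (Finset.mem_univ w)]
          congr 1
          · show ((d (some w) : ℝ)) * y (some w) = _
            have : d (some w) = c none + ∑ i, c (some i) * a' i := by rw [hd]; simp
            rw [this]
            push_cast
            ring
          · refine Finset.sum_congr rfl fun j hj => ?_
            have hjw : j ≠ w := Finset.ne_of_mem_erase hj
            have : d (some j) = -(c (some j)) := by rw [hd]; simp [hjw]
            rw [this]
            push_cast
            ring
        have e4 : (d none : ℝ) = -(c (some w) : ℝ) := by rw [hd]; push_cast; simp
        rw [e3, e4, hsum_y' c] at *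
        rw [← hc]
        have : ∀ j ∈ Finset.univ.erase w, (-(c (some j) : ℝ)) * y (some j)
            = -((c (some j) : ℝ) * y (some j)) := fun j _ => by ring
        rw [Finset.sum_congr rfl this, Finset.sum_neg_distrib]
        rw [hsdef]
        ring
      have hdz := h4 d hd0
      have hcw : c (some w) = 0 := by
        have := hdz none
        rw [hd] at this
        simpa using this
      have hcne : ∀ j, j ≠ w → c (some j) = 0 := by
        intro j hj
        have := hdz (some j)
        rw [hd] at this
        simpa [hj] using this
      have hcs : ∀ j, c (some j) = 0 := by
        intro j
        by_cases hj : j = w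
        · rw [hj]; exact hcw
        · exact hcne j hj
      have hcn : c none = 0 := by
        have := hdz (some w)
        rw [hd] at this
        simp at this
        have hz : ∑ i, c (some i) * a' i = 0 :=
          Finset.sum_eq_zero fun i _ => by rw [hcs i, zero_mul]
        rw [hz] at this
        simpa using this
      intro l
      match l with
      | none => exact hcn
      | some j => exact hcs j
    have hy'ne : ∀ l, y' l ≠ 0 := by
      intro l h0
      have hz := h4' (fun m => if m = l then 1 else 0)
        (by simp [apply_ite (fun z : ℤ => (z : ℝ)), ite_mul, Finset.sum_ite_eq', h0]) l
      simp at hz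
    have hpos' : ∀ i, 0 < seqA hN α (n+1) i := by
      intro i
      have h0 : 0 < |y' (some i)| := abs_pos.mpr (hy'ne (some i))
      rw [h3' (some i)] at h0
      have he : optV hN α (n+1) (some i) = seqA hN α (n+1) i := rfl
      rw [he] at h0
      by_contra hle
      push_neg at hle
      nlinarith
    -- the transfer matrix
    set W : Option (Fin N) → Option (Fin N) → ℤ := fun m l =>
      match m, l with
      | none, none => a' w
      | none, some j => if j = w then -1 else 0
      | some i, none => if i = w then 1 else a' i
      | some i, some j => if i = w then 0 else (if j = i then -1 else 0) with hW
    have hWy : ∀ m, y m = ∑ l, (W m l : ℝ) * y' l := by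
      intro m
      rw [Fintype.sum_option]
      match m with
      | none =>
        have e : ∀ j, ((W none (some j) : ℤ) : ℝ) * y' (some j)
            = if j = w then -(y' (some j)) else 0 := by
          intro j
          by_cases hj : j = w <;> simp [hW, hj]
        rw [Finset.sum_congr rfl (fun j _ => e j),
          Finset.sum_ite_eq' Finset.univ w (fun j => -(y' (some j)))]
        have e2 : ((W none none : ℤ) : ℝ) = (a' w : ℝ) := by simp [hW]
        rw [e2, hy'none]
        simp only [Finset.mem_univ, if_true]
        rw [hy'some w, hhatw]
        ring
      | some i =>
        by_cases hi : i = w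
        · have e : ∀ j, ((W (some i) (some j) : ℤ) : ℝ) * y' (some j) = 0 := by
            intro j; simp [hW, hi]
          rw [Finset.sum_congr rfl (fun j _ => e j), Finset.sum_const, smul_zero]
          have e2 : ((W (some i) none : ℤ) : ℝ) = 1 := by simp [hW, hi]
          rw [e2, hy'none, one_mul, add_zero, hi]
        · have e : ∀ j, ((W (some i) (some j) : ℤ) : ℝ) * y' (some j)
              = if j = i then -(y' (some j)) else 0 := by
            intro j
            by_cases hj : j = i <;> simp [hW, hi, hj]
          rw [Finset.sum_congr rfl (fun j _ => e j),
            Finset.sum_ite_eq' Finset.univ i (fun j => -(y' (some j)))]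
          have e2 : ((W (some i) none : ℤ) : ℝ) = (a' i : ℝ) := by simp [hW, hi]
          rw [e2, hy'none]
          simp only [Finset.mem_univ, if_true]
          rw [hy'some i, hhatne i hi]
          ring
    -- bounds on W
    have haw' : (1:ℝ) ≤ 1 / seqA hN α n w := by
      rw [le_div_iff₀ haw]; simpa using hawle
    have haw'' : (1:ℝ) ≤ (seqA hN α n w)⁻¹ := by rw [← one_div]; exact haw'
    have ha'bound : ∀ i, |(a' i : ℝ)| ≤ 1 / seqA hN α n w + 1 / 2 := by
      intro i
      have h1d : |y (hat i) / s| ≤ 1 / seqA hN α n w := by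
        rw [habs_d i, div_le_div_iff_of_pos_right haw]
        split
        · exact le_refl 1
        · exact seqA_le_one h01 n i
      have e : (a' i : ℝ) = ((round (y (hat i) / s) : ℤ) : ℝ) := by rw [ha']
      calc |(a' i : ℝ)|
          = |(((round (y (hat i) / s) : ℤ) : ℝ) - y (hat i) / s) + y (hat i) / s| := by
            rw [e]; ring_nf
        _ ≤ |((round (y (hat i) / s) : ℤ) : ℝ) - y (hat i) / s| + |y (hat i) / s| :=
            abs_add_le _ _
        _ ≤ 1 / 2 + (1 / seqA hN α n w) := by
            have := abs_sub_round (y (hat i) / s)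
            rw [abs_sub_comm] at this
            exact add_le_add this h1d
        _ = 1 / seqA hN α n w + 1 / 2 := by ring
    have hWb : ∀ m l, |(W m l : ℝ)| ≤ 1 / seqA hN α n w + 1 / 2 := by
      intro m l
      match m, l with
      | none, none => simpa [hW] using ha'bound w
      | none, some j =>
        by_cases hj : j = w <;> simp [hW, hj] <;> linarith [haw', haw'']
      | some i, none =>
        by_cases hi : i = w
        · simp [hW, hi]; linarith [haw', haw'']
        · simpa [hW, hi] using ha'bound i
      | some i, some j =>
        by_cases hi : i = w
        · simp [hW, hi]; positivity
        · by_cases hj : j = i <;> simp [hW, hi, hj] <;> linarith [haw', haw'']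
    refine ⟨hβs, hpos', y', fun k l => ∑ m, B k m * W m l, ?_, ?_, h3', h4'⟩
    · intro k
      rw [h1 k]
      calc ∑ m, (B k m : ℝ) * y m
          = ∑ m, ∑ l, (B k m : ℝ) * ((W m l : ℝ) * y' l) :=
            Finset.sum_congr rfl (fun m _ => by rw [hWy m, Finset.mul_sum])
        _ = ∑ l, ∑ m, (B k m : ℝ) * ((W m l : ℝ) * y' l) := Finset.sum_comm
        _ = ∑ l, ((∑ m, B k m * W m l : ℤ) : ℝ) * y' l := by
            refine Finset.sum_congr rfl fun l _ => ?_
            push_cast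
            rw [Finset.sum_mul]
            exact Finset.sum_congr rfl fun m _ => by ring
    · intro k l
      have hb : |((∑ m, B k m * W m l : ℤ) : ℝ)| ≤ ∑ m, |(B k m : ℝ)| * |(W m l : ℝ)| := by
        push_cast
        refine (Finset.abs_sum_le_sum_abs _ _).trans ?_
        exact le_of_eq (Finset.sum_congr rfl fun m _ => abs_mul _ _)
      have hstep : ∑ m, |(B k m : ℝ)| * |(W m l : ℝ)|
          ≤ ∑ _m : Option (Fin N), ((2*(N:ℝ)+1) ^ n / pβ hN α n) * (1 / seqA hN α n w + 1/2) := by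
        refine Finset.sum_le_sum fun m _ => ?_
        refine mul_le_mul (h2 k m) (hWb m l) (abs_nonneg _) ?_
        positivity
      have hcard : ∑ _m : Option (Fin N), ((2*(N:ℝ)+1) ^ n / pβ hN α n) * (1 / seqA hN α n w + 1/2)
          = ((N:ℝ)+1) * (((2*(N:ℝ)+1) ^ n / pβ hN α n) * (1 / seqA hN α n w + 1/2)) := by
        rw [Finset.sum_const, Finset.card_univ, Fintype.card_option, Fintype.card_fin,
          nsmul_eq_mul]
        push_cast
        ring
      have hNR : (1:ℝ) ≤ (N:ℝ) := by exact_mod_cast hN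
      have hP : (0:ℝ) < (2*(N:ℝ)+1) ^ n := by positivity
      have harith : ((N:ℝ)+1) * (((2*(N:ℝ)+1) ^ n / pβ hN α n) * (1 / seqA hN α n w + 1/2))
          ≤ (2*(N:ℝ)+1) ^ (n+1) / pβ hN α (n+1) := by
        rw [hβ', pow_succ, le_div_iff₀ (by positivity)]
        have expand : ((N:ℝ)+1) * (((2*(N:ℝ)+1) ^ n / pβ hN α n) * (1 / seqA hN α n w + 1/2))
            * (pβ hN α n * seqA hN α n w)
            = (2*(N:ℝ)+1) ^ n * (((N:ℝ)+1) * (1 + seqA hN α n w / 2)) := by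
          field_simp
        rw [expand]
        have hfac : ((N:ℝ)+1) * (1 + seqA hN α n w / 2) ≤ 2*(N:ℝ)+1 := by nlinarith
        calc (2*(N:ℝ)+1) ^ n * (((N:ℝ)+1) * (1 + seqA hN α n w / 2))
            ≤ (2*(N:ℝ)+1) ^ n * (2*(N:ℝ)+1) := by
              exact mul_le_mul_of_nonneg_left hfac hP.le
          _ = (2*(N:ℝ)+1) ^ n * (2*(N:ℝ)+1) := rfl
      calc |((∑ m, B k m * W m l : ℤ) : ℝ)|
          ≤ ∑ m, |(B k m : ℝ)| * |(W m l : ℝ)| := hb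
        _ ≤ _ := hstep
        _ = _ := hcard
        _ ≤ _ := harith




lemma seqA_nonneg {hN : 0 < N} {α : Fin N → ℝ} (h01 : ∀ i, α i ∈ Set.Ioo (0:ℝ) 1)
    (n : ℕ) (i : Fin N) : 0 ≤ seqA hN α n i := by
  cases n with
  | zero => exact (h01 i).1.le
  | succ n => exact abs_nonneg _

lemma pβ_le_one {hN : 0 < N} {α : Fin N → ℝ} (h01 : ∀ i, α i ∈ Set.Ioo (0:ℝ) 1)
    (n : ℕ) : pβ hN α n ≤ 1 :=
  Finset.prod_le_one (fun k _ => seqA_nonneg h01 k _) (fun k _ => seqA_le_one h01 k _)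

lemma pβ_le {hN : 0 < N} {α : Fin N → ℝ} (h01 : ∀ i, α i ∈ Set.Ioo (0:ℝ) 1)
    (n : ℕ) : pβ hN α n ≤ 2 * (1/2) ^ n := by
  induction n with
  | zero => norm_num [pβ]
  | succ n ih =>
    have hsucc : pβ hN α (n+1) = pβ hN α n * seqA hN α n (wseq hN α n) :=
      Finset.prod_range_succ _ n
    match n with
    | 0 =>
      rw [hsucc]
      have : pβ hN α 0 = 1 := Finset.prod_range_zero _
      rw [this, one_mul]
      calc seqA hN α 0 (wseq hN α 0) ≤ 1 := seqA_le_one h01 0 _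
        _ = 2 * (1/2) ^ 1 := by norm_num
    | m + 1 =>
      rw [hsucc]
      calc pβ hN α (m+1) * seqA hN α (m+1) (wseq hN α (m+1))
          ≤ (2 * (1/2) ^ (m+1)) * (1/2) := by
            refine mul_le_mul ih (gaussStep_le_half _ _ _) (seqA_nonneg h01 _ _) (by positivity)
        _ = 2 * (1/2) ^ (m+2) := by ring

lemma max_lower (hN : 0 < N) (α : Fin N → ℝ) {C τ : ℝ} (hC : 0 < C) (hτ : 0 < τ)
    (hα : DCN C τ α) (n : ℕ) :
    min C 1 ≤ 2 * N * pβ hN α n * ((2*(N:ℝ)+1) ^ n / pβ hN α n) ^ τ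
      * ((2*(N:ℝ)+1) ^ n / pβ hN α n) ^ 2 * seqA hN α n (wseq hN α n) := by
  obtain ⟨h01, hind, hdio⟩ := hα
  obtain ⟨hβ, hpos, y, B, h1, h2, h3, h4⟩ := pkg hN α h01 hind n
  set β := pβ hN α n with hβdef
  set bnd := (2*(N:ℝ)+1) ^ n / β with hbnd
  set M := seqA hN α n (wseq hN α n) with hM
  set T := bnd ^ τ with hT
  have hMpos : 0 < M := hpos _
  have hMmax : ∀ i, seqA hN α n i ≤ M := fun i => pickMax_spec hN _ i
  have hβle1 : β ≤ 1 := pβ_le_one h01 n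
  have hbndpos : 0 < bnd := by
    rw [hbnd]; positivity
  have hbnd1 : (1:ℝ) ≤ bnd := by
    rw [hbnd, le_div_iff₀ hβ, one_mul]
    calc β ≤ 1 := hβle1
      _ ≤ (2*(N:ℝ)+1) ^ n := one_le_pow₀ (by linarith [Nat.cast_nonneg (α := ℝ) N])
  have hT1 : (1:ℝ) ≤ T := Real.one_le_rpow hbnd1 hτ.le
  have hTpos : (0:ℝ) < T := lt_of_lt_of_le one_pos hT1
  set r : Option (Fin N) → ℝ := fun k => ∑ j, (B k (some j) : ℝ) * y (some j) with hr
  have hsplit : ∀ k, optE α k = (B k none : ℝ) * y none + r k := by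
    intro k; rw [h1 k, Fintype.sum_option]
  have hrb : ∀ k, |r k| ≤ N * bnd * (β * M) := by
    intro k
    calc |r k| ≤ ∑ j, |(B k (some j) : ℝ) * y (some j)| := Finset.abs_sum_le_sum_abs _ _
      _ ≤ ∑ _j : Fin N, bnd * (β * M) := by
          refine Finset.sum_le_sum fun j _ => ?_
          rw [abs_mul]
          refine mul_le_mul (h2 k (some j)) ?_ (abs_nonneg _) hbndpos.le
          rw [h3 (some j)]
          exact mul_le_mul_of_nonneg_left (hMmax j) hβ.le
      _ = N * (bnd * (β * M)) := by
          rw [Finset.sum_const, Finset.card_univ, Fintype.card_fin, nsmul_eq_mul]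
      _ = N * bnd * (β * M) := by ring
  have he1 : (1:ℝ) = (B none none : ℝ) * y none + r none := hsplit none
  by_cases hcase : (N:ℝ) * bnd * (β * M) < 1/2
  · have hq0 : B none none ≠ 0 := by
      intro h0
      rw [h0] at he1
      have hrn := (abs_le.mp ((hrb none).trans hcase.le)).2
      push_cast at he1
      linarith [he1, hrn]
    obtain ⟨j, hj⟩ := hdio (B none none) hq0 (fun j => B (some j) none)
    have he2 : α j = (B (some j) none : ℝ) * y none + r (some j) := hsplit (some j)
    have hid : (B none none : ℝ) * α j - (B (some j) none : ℝ)
        = (B none none : ℝ) * r (some j) - (B (some j) none : ℝ) * r none := by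
      linear_combination (B none none : ℝ) * he2 - (B (some j) none : ℝ) * he1
    have habs : |(B none none : ℝ) * α j - (B (some j) none : ℝ)|
        ≤ 2 * N * β * bnd ^ 2 * M := by
      rw [hid]
      calc |(B none none : ℝ) * r (some j) - (B (some j) none : ℝ) * r none|
          ≤ |(B none none : ℝ)| * |r (some j)| + |(B (some j) none : ℝ)| * |r none| := by
            refine (abs_sub _ _).trans ?_
            rw [abs_mul, abs_mul]
        _ ≤ bnd * (N * bnd * (β * M)) + bnd * (N * bnd * (β * M)) := by
            refine add_le_add ?_ ?_ <;>
              exact mul_le_mul (h2 _ _) (hrb _) (abs_nonneg _) hbndpos.le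
        _ = 2 * N * β * bnd ^ 2 * M := by ring
    have hq1 : (1:ℝ) ≤ |((B none none : ℤ) : ℝ)| := by
      rw [← Int.cast_abs]
      exact_mod_cast Int.one_le_abs hq0
    have hqabs : |((B none none : ℤ) : ℝ)| ≤ bnd := h2 none none
    have hqτpos : (0:ℝ) < |((B none none : ℤ) : ℝ)| ^ τ :=
      Real.rpow_pos_of_pos (lt_of_lt_of_le one_pos hq1) τ
    have hrpow : |((B none none : ℤ) : ℝ)| ^ τ ≤ T :=
      Real.rpow_le_rpow (abs_nonneg _) hqabs hτ.le
    have hchain : C / T ≤ 2 * N * β * bnd ^ 2 * M := by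
      calc C / T ≤ C / |((B none none : ℤ) : ℝ)| ^ τ :=
            div_le_div_of_nonneg_left hC.le hqτpos hrpow
        _ ≤ |((B none none : ℤ) : ℝ) * α j - ((B (some j) none : ℤ) : ℝ)| := hj
        _ ≤ 2 * N * β * bnd ^ 2 * M := habs
    have hCle : C ≤ 2 * N * β * bnd ^ 2 * M * T := by
      rw [div_le_iff₀ hTpos] at hchain
      linarith
    calc min C 1 ≤ C := min_le_left _ _
      _ ≤ 2 * N * β * bnd ^ 2 * M * T := hCle
      _ = 2 * N * β * T * bnd ^ 2 * M := by ring
  · push_neg at hcase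
    have hb2 : bnd ≤ bnd ^ 2 := by nlinarith
    calc min C 1 ≤ 1 := min_le_right _ _
      _ ≤ 2 * N * bnd * (β * M) := by linarith
      _ ≤ 2 * N * β * T * bnd ^ 2 * M := by
          have h1' : 2 * N * bnd * (β * M) ≤ 2 * N * bnd ^ 2 * (β * M) := by
            have hNn : (0:ℝ) ≤ 2 * N := by positivity
            nlinarith [mul_pos hβ hMpos]
          have h2' : 2 * N * bnd ^ 2 * (β * M) ≤ T * (2 * N * bnd ^ 2 * (β * M)) := by
            nlinarith [mul_pos hβ hMpos, mul_pos (mul_pos hbndpos hbndpos) (mul_pos hβ hMpos)]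
          calc 2 * N * bnd * (β * M) ≤ 2 * N * bnd ^ 2 * (β * M) := h1'
            _ ≤ T * (2 * N * bnd ^ 2 * (β * M)) := h2'
            _ = 2 * N * β * T * bnd ^ 2 * M := by ring


lemma xlog_le_one {x : ℝ} (hx : 0 < x) (hx1 : x ≤ 1) : x * (-Real.log x) ≤ 1 := by
  have h := Real.log_le_sub_one_of_pos (show (0:ℝ) < 1/x by positivity)
  have hlog : Real.log (1/x) = -Real.log x := by rw [one_div, Real.log_inv]
  rw [hlog] at h
  have := mul_le_mul_of_nonneg_left h hx.le
  have hxx : x * (1/x - 1) = 1 - x := by field_simp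
  nlinarith

lemma xlog_mono {x y : ℝ} (hx : 0 < x) (hxy : x ≤ y) (hy : y ≤ Real.exp (-1)) :
    x * (-Real.log x) ≤ y * (-Real.log y) := by
  have hy0 : 0 < y := lt_of_lt_of_le hx hxy
  set u := x / y with hu_def
  have hu : 0 < u := by positivity
  have hu1 : u ≤ 1 := by rw [hu_def, div_le_one hy0]; exact hxy
  have hxuy : x = u * y := by rw [hu_def]; field_simp
  have hlogy : 1 ≤ -Real.log y := by
    have h1 : Real.log y ≤ Real.log (Real.exp (-1)) :=
      (Real.log_le_log_iff hy0 (Real.exp_pos _)).mpr hy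
    rw [Real.log_exp] at h1
    linarith
  have hkey : u * (-Real.log u) ≤ 1 - u := by
    have h := Real.log_le_sub_one_of_pos (show (0:ℝ) < 1/u by positivity)
    have hlog : Real.log (1/u) = -Real.log u := by rw [one_div, Real.log_inv]
    rw [hlog] at h
    have := mul_le_mul_of_nonneg_left h hu.le
    have huu : u * (1/u - 1) = 1 - u := by field_simp
    nlinarith
  have hlx : Real.log x = Real.log u + Real.log y := by
    rw [hxuy, Real.log_mul hu.ne' hy0.ne']
  have hexp : x * (-Real.log x) = y * (u * (-Real.log u)) + u * (y * (-Real.log y)) := by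
    rw [hlx, hxuy]; ring
  have hA : 0 ≤ y * (1 - u) * (-Real.log y - 1) :=
    mul_nonneg (mul_nonneg hy0.le (by linarith)) (by linarith)
  have hB : y * (u * (-Real.log u)) ≤ y * (1 - u) :=
    mul_le_mul_of_nonneg_left hkey hy0.le
  nlinarith

lemma log_term_le (hN : 0 < N) (α : Fin N → ℝ) {C τ : ℝ} (hC : 0 < C) (hτ : 0 < τ)
    (hα : DCN C τ α) (n : ℕ) :
    Real.log (1 / seqA hN α n (wseq hN α n)) ≤
      (Real.log (2*(N:ℝ)) - Real.log (min C 1)) + ((τ+2) * Real.log (2*(N:ℝ)+1)) * n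
        + (τ+1) * (-Real.log (pβ hN α n)) := by
  have hpkg := pkg hN α hα.1 hα.2.1 n
  have hβ : 0 < pβ hN α n := hpkg.1
  have hM : 0 < seqA hN α n (wseq hN α n) := hpkg.2.1 _
  have hml := max_lower hN α hC hτ hα n
  set β := pβ hN α n with hβdef
  set bnd := (2*(N:ℝ)+1) ^ n / β with hbnd
  set M := seqA hN α n (wseq hN α n) with hM'
  set T := bnd ^ τ with hT
  have hNpos : (0:ℝ) < N := by exact_mod_cast hN
  have hbndpos : 0 < bnd := by rw [hbnd]; positivity
  have hTpos : (0:ℝ) < T := Real.rpow_pos_of_pos hbndpos τ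
  have hmin : 0 < min C 1 := lt_min hC one_pos
  have hRHSpos : (0:ℝ) < 2 * N * β * T * bnd ^ 2 * M := by positivity
  have hlog : Real.log (min C 1) ≤ Real.log (2 * N * β * T * bnd ^ 2 * M) :=
    (Real.log_le_log_iff hmin hRHSpos).mpr hml
  have hlogbnd : Real.log bnd = n * Real.log (2*(N:ℝ)+1) - Real.log β := by
    rw [hbnd, Real.log_div (by positivity) hβ.ne', Real.log_pow]
  have hExpand : Real.log (2 * N * β * T * bnd ^ 2 * M)
      = Real.log (2*(N:ℝ)) + Real.log β + τ * Real.log bnd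
        + 2 * Real.log bnd + Real.log M := by
    rw [Real.log_mul (by positivity) hM.ne', Real.log_mul (by positivity) (by positivity),
      Real.log_mul (by positivity) hTpos.ne', Real.log_mul (by positivity) hβ.ne',
      hT, Real.log_rpow hbndpos, Real.log_pow]
    push_cast
    ring
  rw [hExpand, hlogbnd] at hlog
  rw [one_div, Real.log_inv]
  nlinarith [hlog]

end DioBrjuno

open DioBrjuno in
/-- Moser's Diophantine condition implies the multivariable Brjuno condition:
if `(α₁,…,α_N) ∈ DC_N(C, τ)` for some `C, τ > 0` then `B(α₁,…,α_N) < +∞`. -/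
theorem diophantine_implies_brjuno (N : ℕ) (hN : 2 ≤ N) (C τ : ℝ) (hC : 0 < C)
    (hτ : 0 < τ) (α : Fin N → ℝ) (hα : DCN C τ α) :
    brjuno α < ⊤ := by
  have hN0 : 0 < N := by omega
  obtain ⟨h01, hind, hdio⟩ := id hα
  set A := Real.log (2*(N:ℝ)) - Real.log (min C 1) with hA
  set Bc := (τ+2) * Real.log (2*(N:ℝ)+1) with hBc
  have hNpos : (1:ℝ) ≤ N := by exact_mod_cast hN0
  have hA0 : 0 ≤ A := by
    have h1 : Real.log (min C 1) ≤ 0 :=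
      Real.log_nonpos (le_min hC.le zero_le_one) (min_le_right C 1)
    have h2 : 0 ≤ Real.log (2*(N:ℝ)) := Real.log_nonneg (by linarith)
    rw [hA]; linarith
  have hlog2 : 0 ≤ Real.log 2 := Real.log_nonneg one_le_two
  have hBc0 : 0 ≤ Bc := by
    have h2 : 0 ≤ Real.log (2*(N:ℝ)+1) := Real.log_nonneg (by linarith)
    rw [hBc]
    exact mul_nonneg (by linarith) h2
  set g : ℕ → ℝ := fun n =>
    2*(1/2)^n * (A + Bc*n) + (τ+1) * (4*(1/2)^n*(1 + n*Real.log 2)) with hg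
  have hg0 : ∀ n, 0 ≤ g n := by
    intro n
    rw [hg]
    have h1 : (0:ℝ) ≤ 2*(1/2:ℝ)^n * (A + Bc*n) :=
      mul_nonneg (by positivity) (add_nonneg hA0 (mul_nonneg hBc0 (Nat.cast_nonneg n)))
    have h2 : (0:ℝ) ≤ (τ+1) * (4*(1/2:ℝ)^n*(1 + n*Real.log 2)) :=
      mul_nonneg (by linarith)
        (mul_nonneg (by positivity)
          (add_nonneg zero_le_one (mul_nonneg (Nat.cast_nonneg n) hlog2)))
    linarith
  have hgsum : Summable g := by
    have hs1 : Summable (fun n : ℕ => (1/2:ℝ)^n) :=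
      summable_geometric_of_lt_one (by norm_num) (by norm_num)
    have hs2 : Summable (fun n : ℕ => (n:ℝ)*(1/2:ℝ)^n) := by
      have h := summable_pow_mul_geometric_of_norm_lt_one (R := ℝ) 1
        (r := (1/2:ℝ)) (by rw [Real.norm_eq_abs, abs_of_pos (by norm_num : (0:ℝ) < 1/2)]; norm_num)
      simpa [pow_one] using h
    have he : g = fun n : ℕ => ((2*A)*(1/2:ℝ)^n + (2*Bc)*((n:ℝ)*(1/2:ℝ)^n)
        + ((τ+1)*4)*(1/2:ℝ)^n) + ((τ+1)*4*Real.log 2)*((n:ℝ)*(1/2:ℝ)^n) := by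
      funext n; rw [hg]; ring
    rw [he]
    exact (((hs1.mul_left _).add (hs2.mul_left _)).add (hs1.mul_left _)).add (hs2.mul_left _)
  have hterm : ∀ n, pβ hN0 α n * Real.log (1 / seqA hN0 α n (wseq hN0 α n)) ≤ g n := by
    intro n
    have hpkg := pkg hN0 α h01 hind n
    have hβpos : 0 < pβ hN0 α n := hpkg.1
    have hβ2 : pβ hN0 α n ≤ 2*(1/2:ℝ)^n := pβ_le h01 n
    have hβ1 : pβ hN0 α n ≤ 1 := pβ_le_one h01 n
    have hlog := log_term_le hN0 α hC hτ hα n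
    have s1 : pβ hN0 α n * Real.log (1 / seqA hN0 α n (wseq hN0 α n))
        ≤ pβ hN0 α n * (A + Bc*n + (τ+1)*(-Real.log (pβ hN0 α n))) :=
      mul_le_mul_of_nonneg_left (by rw [hA, hBc]; exact hlog) hβpos.le
    have hABn : (0:ℝ) ≤ A + Bc*n := add_nonneg hA0 (mul_nonneg hBc0 (Nat.cast_nonneg n))
    have s2 : pβ hN0 α n * (A + Bc*n) ≤ 2*(1/2:ℝ)^n*(A + Bc*n) :=
      mul_le_mul_of_nonneg_right hβ2 hABn
    have hh : pβ hN0 α n * (-Real.log (pβ hN0 α n)) ≤ 4*(1/2:ℝ)^n*(1 + n*Real.log 2) := by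
      rcases lt_or_ge n 3 with h3 | h3
      · have hle1 := xlog_le_one hβpos hβ1
        have hge1 : (1:ℝ) ≤ 4*(1/2:ℝ)^n*(1 + n*Real.log 2) := by
          interval_cases n
          · norm_num
          · norm_num; nlinarith [hlog2]
          · norm_num; nlinarith [hlog2]
        linarith
      · have he4 : Real.exp 1 ≤ 4 := by
          have h9 := Real.exp_one_lt_d9; linarith
        have hyexp : 2*(1/2:ℝ)^n ≤ Real.exp (-1) := by
          have hmono : (1/2:ℝ)^n ≤ (1/2:ℝ)^3 :=
            pow_le_pow_of_le_one (by norm_num) (by norm_num) h3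
          calc 2*(1/2:ℝ)^n ≤ 2*(1/2:ℝ)^3 := by linarith
            _ = 1/4 := by norm_num
            _ ≤ Real.exp (-1) := by
                rw [Real.exp_neg, ← one_div]
                exact one_div_le_one_div_of_le (Real.exp_pos 1) he4
        have hmono2 := xlog_mono hβpos hβ2 hyexp
        have hlogval : -Real.log (2*(1/2:ℝ)^n) = ((n:ℝ)-1)*Real.log 2 := by
          rw [Real.log_mul two_ne_zero (by positivity), Real.log_pow]
          have hl : Real.log (1/2:ℝ) = -Real.log 2 := by rw [one_div, Real.log_inv]
          rw [hl]; ring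
        rw [hlogval] at hmono2
        have hfin : 2*(1/2:ℝ)^n * (((n:ℝ)-1)*Real.log 2)
            ≤ 4*(1/2:ℝ)^n*(1 + n*Real.log 2) := by
          have hp : (0:ℝ) ≤ (1/2:ℝ)^n := by positivity
          have hcn : (0:ℝ) ≤ (n:ℝ) := Nat.cast_nonneg n
          nlinarith [mul_nonneg hp hlog2, mul_nonneg (mul_nonneg hp hcn) hlog2]
        linarith
    have s3 : (τ+1)*(pβ hN0 α n*(-Real.log (pβ hN0 α n)))
        ≤ (τ+1)*(4*(1/2:ℝ)^n*(1 + n*Real.log 2)) :=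
      mul_le_mul_of_nonneg_left hh (by linarith)
    have hexp2 : pβ hN0 α n * (A + Bc*n + (τ+1)*(-Real.log (pβ hN0 α n)))
        = pβ hN0 α n * (A + Bc*n) + (τ+1)*(pβ hN0 α n*(-Real.log (pβ hN0 α n))) := by ring
    rw [hg]
    linarith [s1, s2, s3]
  have hbs : brjunoSum α (wseq hN0 α) = ∑' n, ENNReal.ofReal
      (pβ hN0 α n * Real.log (1 / seqA hN0 α n (wseq hN0 α n))) := by
    rw [brjunoSum]
    refine tsum_congr fun n => ?_
    simp only [gaussIter_wseq]
    rfl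
  have hle : brjuno α ≤ brjunoSum α (wseq hN0 α) := iInf_le _ _
  refine lt_of_le_of_lt hle ?_
  rw [hbs]
  calc (∑' n, ENNReal.ofReal (pβ hN0 α n * Real.log (1 / seqA hN0 α n (wseq hN0 α n))))
      ≤ ∑' n, ENNReal.ofReal (g n) :=
        ENNReal.tsum_le_tsum fun n => ENNReal.ofReal_le_ofReal (hterm n)
    _ = ENNReal.ofReal (∑' n, g n) := (ENNReal.ofReal_tsum_of_nonneg hg0 hgsum).symm
    _ < ⊤ := ENNReal.ofReal_lt_top
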